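/- For each fixed a with |a| < 1, the octonionic Szegő kernel S(x,a) = (1 - x̄a)/|1 - x̄a|⁸ is left 𝕆-analytic in x on the closed unit ball of ℝ⁸ ≅ 𝕆 (indeed on the ball of radius 1/|a|), i.e., D_x S(x,a) = 0. -/

import Mathlib

noncomputable section
open MeasureTheory Metric
open scoped Quaternion

/-- The octonions, via the Cayley–Dickson construction on the quaternions,
carrying the Euclidean (`L²`) norm. -/
abbrev Octonion : Type := WithLp 2 (ℍ[ℝ] × ℍ[ℝ])

namespace Octonion

def mk (a b : ℍ[ℝ]) : Octonion := (WithLp.equiv 2 (ℍ[ℝ] × ℍ[ℝ])).symm (a, b)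
def p1 (x : Octonion) : ℍ[ℝ] := (WithLp.equiv 2 (ℍ[ℝ] × ℍ[ℝ]) x).1
def p2 (x : Octonion) : ℍ[ℝ] := (WithLp.equiv 2 (ℍ[ℝ] × ℍ[ℝ]) x).2

instance : One Octonion := ⟨mk 1 0⟩
/-- Cayley–Dickson multiplication: `(a,b)(c,d) = (ac - d̄b, da + bc̄)`. -/
instance : Mul Octonion :=
  ⟨fun x y => mk (p1 x * p1 y - star (p2 y) * p2 x) (p2 y * p1 x + p2 x * star (p1 y))⟩

/-- Octonionic conjugation. -/
def conj (x : Octonion) : Octonion := mk (star (p1 x)) (-(p2 x))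

/-- The standard basis `e₀ = 1, e₁, …, e₇` of the octonions. -/
def e : Fin 8 → Octonion
  | 0 => mk 1 0
  | 1 => mk ⟨0,1,0,0⟩ 0
  | 2 => mk ⟨0,0,1,0⟩ 0
  | 3 => mk ⟨0,0,0,1⟩ 0
  | 4 => mk 0 1
  | 5 => mk 0 ⟨0,1,0,0⟩
  | 6 => mk 0 ⟨0,0,1,0⟩
  | 7 => mk 0 ⟨0,0,0,1⟩

/-- The real coordinates of an octonion w.r.t. the basis `e`. -/
def coord (i : Fin 8) (x : Octonion) : ℝ :=
  match i with
  | 0 => (p1 x).re | 1 => (p1 x).imI | 2 => (p1 x).imJ | 3 => (p1 x).imK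
  | 4 => (p2 x).re | 5 => (p2 x).imI | 6 => (p2 x).imJ | 7 => (p2 x).imK

/-- Partial derivative in the direction `e i`. -/
def pd (i : Fin 8) (f : Octonion → Octonion) (x : Octonion) : Octonion :=
  fderiv ℝ f x (e i)

/-- The generalized Cauchy–Riemann operator `Df = ∑ eᵢ ∂f/∂xᵢ`. -/
def D (f : Octonion → Octonion) (x : Octonion) : Octonion := ∑ i, e i * pd i f x

/-- The right-acting Cauchy–Riemann operator `fD = ∑ (∂f/∂xᵢ) eᵢ`. -/
def Dright (f : Octonion → Octonion) (x : Octonion) : Octonion := ∑ i, pd i f x * e i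

/-- The conjugate Cauchy–Riemann operator `D̄f = ∑ ēᵢ ∂f/∂xᵢ`. -/
def Dbar (f : Octonion → Octonion) (x : Octonion) : Octonion := ∑ i, conj (e i) * pd i f x

/-- The Laplacian `Δf = ∑ ∂²f/∂xᵢ²`. -/
def lap (f : Octonion → Octonion) (x : Octonion) : Octonion :=
  ∑ i, fderiv ℝ (fun y => fderiv ℝ f y (e i)) x (e i)

instance : MeasurableSpace Octonion := borel _
instance : BorelSpace Octonion := ⟨rfl⟩
instance : MeasureSpace Octonion := ⟨Measure.addHaar⟩

/-- The surface measure on the unit sphere `S⁷`. -/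
def sphereMeasure : Measure (sphere (0 : Octonion) 1) := (volume : Measure Octonion).toSphere

/-- `ω₈`, the surface area of the unit sphere in `ℝ⁸`. -/
def ω : ℝ := (sphereMeasure Set.univ).toReal

end Octonion

namespace Octonion
lemma p1_mk (a b : ℍ[ℝ]) : p1 (mk a b) = a := rfl
lemma p2_mk (a b : ℍ[ℝ]) : p2 (mk a b) = b := rfl
lemma oext {x y : Octonion} (h1 : p1 x = p1 y) (h2 : p2 x = p2 y) : x = y :=
  (WithLp.equiv 2 (ℍ[ℝ] × ℍ[ℝ])).injective (Prod.ext h1 h2)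
lemma p1_add (x y : Octonion) : p1 (x + y) = p1 x + p1 y := rfl
lemma p2_add (x y : Octonion) : p2 (x + y) = p2 x + p2 y := rfl
lemma p1_sub (x y : Octonion) : p1 (x - y) = p1 x - p1 y := rfl
lemma p2_sub (x y : Octonion) : p2 (x - y) = p2 x - p2 y := rfl
lemma p1_smul (r : ℝ) (x : Octonion) : p1 (r • x) = r • p1 x := rfl
lemma p2_smul (r : ℝ) (x : Octonion) : p2 (r • x) = r • p2 x := rfl
lemma p1_one : p1 (1 : Octonion) = 1 := rfl
lemma p2_one : p2 (1 : Octonion) = 0 := rfl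
lemma p1_zero : p1 (0 : Octonion) = 0 := rfl
lemma p2_zero : p2 (0 : Octonion) = 0 := rfl
lemma p1_mul (x y : Octonion) : p1 (x * y) = p1 x * p1 y - star (p2 y) * p2 x := rfl
lemma p2_mul (x y : Octonion) : p2 (x * y) = p2 y * p1 x + p2 x * star (p1 y) := rfl
lemma p1_conj (x : Octonion) : p1 (conj x) = star (p1 x) := rfl
lemma p2_conj (x : Octonion) : p2 (conj x) = -(p2 x) := rfl
lemma inner_def (x y : Octonion) :
    (inner ℝ x y : ℝ) = (p1 x * star (p1 y)).re + (p2 x * star (p2 y)).re := by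
  rw [WithLp.prod_inner_apply]; rfl
def qm (r i j k : ℝ) : ℍ[ℝ] := ⟨r,i,j,k⟩
@[simp] lemma qm_re (r i j k : ℝ) : (qm r i j k).re = r := rfl
@[simp] lemma qm_imI (r i j k : ℝ) : (qm r i j k).imI = i := rfl
@[simp] lemma qm_imJ (r i j k : ℝ) : (qm r i j k).imJ = j := rfl
@[simp] lemma qm_imK (r i j k : ℝ) : (qm r i j k).imK = k := rfl
lemma p1_mkl (r i j k : ℝ) (b : ℍ[ℝ]) : p1 (mk ⟨r,i,j,k⟩ b) = qm r i j k := rfl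
lemma p2_mkl (r i j k : ℝ) (b : ℍ[ℝ]) : p2 (mk ⟨r,i,j,k⟩ b) = b := rfl
lemma p1_mkr (r i j k : ℝ) (b : ℍ[ℝ]) : p1 (mk b ⟨r,i,j,k⟩) = b := rfl
lemma p2_mkr (r i j k : ℝ) (b : ℍ[ℝ]) : p2 (mk b ⟨r,i,j,k⟩) = qm r i j k := rfl
end Octonion
namespace Octonion
set_option maxHeartbeats 2000000 in
lemma sumB (a : Octonion) : (∑ i, e i * (conj (e i) * a)) = (8:ℝ) • a := by
  apply oext <;>
  · simp only [Fin.sum_univ_eight, e, p1_add, p2_add, p1_mul, p2_mul, p1_conj, p2_conj,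
      p1_mk, p2_mk, p1_mkl, p2_mkl, p1_mkr, p2_mkr, p1_smul, p2_smul]
    ext <;>
      simp [Quaternion.re_mul, Quaternion.imI_mul, Quaternion.imJ_mul, Quaternion.imK_mul] <;>
      ring
end Octonion
namespace Octonion
set_option maxHeartbeats 4000000 in
lemma sumA (u a : Octonion) :
    (∑ i, (inner ℝ u (conj (e i) * a) : ℝ) • (e i * u)) = (inner ℝ u u : ℝ) • a := by
  apply oext <;>
  · simp only [Fin.sum_univ_eight, inner_def, e, p1_add, p2_add, p1_mul, p2_mul, p1_conj,
      p2_conj, p1_mk, p2_mk, p1_mkl, p2_mkl, p1_mkr, p2_mkr, p1_smul, p2_smul]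
    ext <;>
      simp [Quaternion.re_mul, Quaternion.imI_mul, Quaternion.imJ_mul, Quaternion.imK_mul,
        QuaternionAlgebra.re_smul, QuaternionAlgebra.imI_smul, QuaternionAlgebra.imJ_smul,
        QuaternionAlgebra.imK_smul, smul_eq_mul] <;>
      ring
end Octonion
namespace Octonion

lemma p1_neg (x : Octonion) : p1 (-x) = -(p1 x) := rfl
lemma p2_neg (x : Octonion) : p2 (-x) = -(p2 x) := rfl

lemma mul_add_left (x y z : Octonion) : x * (y + z) = x * y + x * z := by
  apply oext <;> simp [p1_mul, p2_mul, p1_add, p2_add, star_add] <;> noncomm_ring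

lemma mul_smul_left (r : ℝ) (x y : Octonion) : x * (r • y) = r • (x * y) := by
  apply oext <;> simp [p1_mul, p2_mul, p1_smul, p2_smul, star_smul] <;> module

lemma mul_sub_left (x y z : Octonion) : x * (y - z) = x * y - x * z := by
  apply oext <;> simp [p1_mul, p2_mul, p1_sub, p2_sub, star_sub] <;> noncomm_ring

lemma mul_neg_left (x y : Octonion) : x * (-y) = -(x * y) := by
  apply oext <;> simp [p1_mul, p2_mul, p1_neg, p2_neg, star_neg] <;> abel

lemma add_mul_right (x y z : Octonion) : (x + y) * z = x * z + y * z := by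
  apply oext <;> simp [p1_mul, p2_mul, p1_add, p2_add, star_add] <;> noncomm_ring

lemma smul_mul_right (r : ℝ) (x y : Octonion) : (r • x) * y = r • (x * y) := by
  apply oext <;> simp [p1_mul, p2_mul, p1_smul, p2_smul, star_smul] <;> module

lemma conj_add (x y : Octonion) : conj (x + y) = conj x + conj y := by
  apply oext <;> simp [p1_conj, p2_conj, p1_add, p2_add, star_add] <;> abel

lemma conj_smul (r : ℝ) (x : Octonion) : conj (r • x) = r • conj x := by
  apply oext <;> simp [p1_conj, p2_conj, p1_smul, p2_smul, star_smul]

/-- `y ↦ conj y * a` as a continuous linear map. -/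
def Lc (a : Octonion) : Octonion →L[ℝ] Octonion :=
  LinearMap.toContinuousLinearMap
    { toFun := fun y => conj y * a
      map_add' := fun x y => by show conj (x + y) * a = _; rw [conj_add, add_mul_right]
      map_smul' := fun r x => by show conj (r • x) * a = _; rw [conj_smul, smul_mul_right]; rfl }

lemma Lc_apply (a y : Octonion) : Lc a y = conj y * a := rfl

end Octonion
namespace Octonion

set_option maxHeartbeats 2000000 in
lemma inner_conj_mul (x a : Octonion) :
    (inner ℝ (conj x * a) (conj x * a) : ℝ) = (inner ℝ x x : ℝ) * (inner ℝ a a : ℝ) := by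
  simp only [inner_def, p1_mul, p2_mul, p1_conj, p2_conj]
  simp [Quaternion.re_mul, Quaternion.imI_mul, Quaternion.imJ_mul, Quaternion.imK_mul]
  ring

lemma norm_conj_mul (x a : Octonion) : ‖conj x * a‖ = ‖x‖ * ‖a‖ := by
  have h := inner_conj_mul x a
  rw [real_inner_self_eq_norm_sq, real_inner_self_eq_norm_sq, real_inner_self_eq_norm_sq] at h
  calc ‖conj x * a‖ = Real.sqrt (‖conj x * a‖ ^ 2) := (Real.sqrt_sq (norm_nonneg _)).symm
    _ = Real.sqrt ((‖x‖ * ‖a‖) ^ 2) := by rw [h]; ring_nf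
    _ = ‖x‖ * ‖a‖ := Real.sqrt_sq (by positivity)

lemma norm_one' : ‖(1 : Octonion)‖ = 1 := by
  have h : (inner ℝ (1:Octonion) (1:Octonion) : ℝ) = 1 := by
    rw [inner_def, p1_one, p2_one]; simp
  rw [real_inner_self_eq_norm_sq] at h
  calc ‖(1:Octonion)‖ = Real.sqrt (‖(1:Octonion)‖ ^ 2) := (Real.sqrt_sq (norm_nonneg _)).symm
    _ = 1 := by rw [h]; exact Real.sqrt_one

end Octonion

/-- The octonionic Szegő kernel `S(x,a) = (1 - x̄a)/|1 - x̄a|⁸` is left octonionic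
analytic in `x` on the ball of radius `1/|a|` (in particular on the closed unit ball). -/
theorem octonion_szego_kernel_analytic (a : Octonion) (ha : ‖a‖ < 1)
    (x : Octonion) (hx : ‖x‖ * ‖a‖ < 1) :
    Octonion.D (fun y =>
      (‖(1 : Octonion) - Octonion.conj y * a‖ ^ 8)⁻¹ •
        ((1 : Octonion) - Octonion.conj y * a)) x = 0 := by
  have hxa : ‖Octonion.conj x * a‖ < 1 := by rw [Octonion.norm_conj_mul]; exact hx
  set u : Octonion := 1 - Octonion.conj x * a with hu_def
  have hne : u ≠ 0 := by
    intro h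
    rw [hu_def, sub_eq_zero] at h
    rw [← h, Octonion.norm_one'] at hxa
    exact lt_irrefl _ hxa
  set c : ℝ := (inner ℝ u u : ℝ) with hc_def
  have hc0 : c ≠ 0 := fun h => hne (inner_self_eq_zero.mp h)
  have hu' : HasFDerivAt (fun y => (1 : Octonion) - Octonion.conj y * a) (-(Octonion.Lc a)) x :=
    (Octonion.Lc a).hasFDerivAt.const_sub 1
  have hinner := HasFDerivAt.inner (𝕜 := ℝ) hu' hu'
  have hφ : HasDerivAt (fun t : ℝ => (t ^ 4)⁻¹) (-(↑(4:ℕ) * c ^ 3) / (c ^ 4) ^ 2) c :=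
    (hasDerivAt_pow 4 c).inv (pow_ne_zero 4 hc0)
  have hg := hφ.comp_hasFDerivAt x hinner
  have hF := hg.smul hu'
  have hfd := hF.fderiv
  have hfun : (fun y => (‖(1 : Octonion) - Octonion.conj y * a‖ ^ 8)⁻¹ •
        ((1 : Octonion) - Octonion.conj y * a))
      = (fun y => ((fun t : ℝ => (t ^ 4)⁻¹) ∘ fun t =>
          (inner ℝ ((1 : Octonion) - Octonion.conj t * a) ((1 : Octonion) - Octonion.conj t * a) : ℝ)) y •
            ((1 : Octonion) - Octonion.conj y * a)) := by
    funext y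
    simp only [Function.comp_apply]
    rw [real_inner_self_eq_norm_sq, ← pow_mul]
  rw [Octonion.D]
  simp only [Octonion.pd]
  rw [hfun]; erw [hfd]
  have hterm : ∀ i : Fin 8,
      Octonion.e i * ((((fun t : ℝ => (t ^ 4)⁻¹) ∘ fun t =>
          (inner ℝ ((1 : Octonion) - Octonion.conj t * a) ((1 : Octonion) - Octonion.conj t * a) : ℝ)) x •
            -(Octonion.Lc a) +
          ((-(↑(4:ℕ) * c ^ 3) / (c ^ 4) ^ 2) •
            (fderivInnerCLM ℝ ((1 : Octonion) - Octonion.conj x * a,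
                (1 : Octonion) - Octonion.conj x * a)).comp
              ((-(Octonion.Lc a)).prod (-(Octonion.Lc a)))).smulRight
            ((1 : Octonion) - Octonion.conj x * a)) (Octonion.e i))
        = (8 * (c ^ 5)⁻¹) • ((inner ℝ u (Octonion.conj (Octonion.e i) * a) : ℝ) •
            (Octonion.e i * u))
          + (-(c ^ 4)⁻¹) • (Octonion.e i * (Octonion.conj (Octonion.e i) * a)) := by
    intro i
    simp only [ContinuousLinearMap.add_apply, ContinuousLinearMap.coe_smul', Pi.smul_apply,
      ContinuousLinearMap.smulRight_apply, ContinuousLinearMap.smul_apply,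
      ContinuousLinearMap.comp_apply, ContinuousLinearMap.prod_apply,
      ContinuousLinearMap.neg_apply, fderivInnerCLM_apply, Octonion.Lc_apply,
      Function.comp_apply, inner_neg_right, inner_neg_left, smul_eq_mul]
    rw [real_inner_comm (Octonion.conj (Octonion.e i) * a) u]
    rw [Octonion.mul_add_left, Octonion.mul_smul_left, Octonion.mul_neg_left,
      Octonion.mul_smul_left]
    rw [← hu_def, ← hc_def]
    match_scalars <;> field_simp <;> ring
  rw [Finset.sum_congr rfl fun i _ => hterm i]
  rw [Finset.sum_add_distrib, ← Finset.smul_sum, ← Finset.smul_sum,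
    Octonion.sumA, Octonion.sumB, ← hc_def, smul_smul, smul_smul, ← add_smul]
  have : 8 * (c ^ 5)⁻¹ * c + -(c ^ 4)⁻¹ * 8 = 0 := by field_simp; ring
  rw [this, zero_smul]
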